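/- arXiv:1902.04455 — 3 statements merged into one kernel-verified Lean document; each statement's English description precedes it below -/
import Mathlib

section
/- Define Θ: ℝ⁵ → ℝ by Θ(u₁,u₂,u₃,u₄,u₅) = u₁u₂(u₄²+u₅²−u₃²) + u₄u₅(u₁²+u₂²−u₃²). Then for any point ω'' = (t_{n-2}, x_{n-2}, t_{n-1}, x_{n-1}, t_n) with all coordinates positive satisfying the strict triangle inequality t_{n-1} < x_{n-2} + t_{n-2}, the partial derivatives ∂Θ/∂u₄(ω'') = 2x_{n-1}t_{n-2}x_{n-2} + t_n(x_{n-2}² + t_{n-2}² − t_{n-1}²) and ∂Θ/∂u₅(ω'') = 2t_n t_{n-2}x_{n-2} + x_{n-1}(x_{n-2}² + t_{n-2}² − t_{n-1}²) do not both vanish. -/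
/-- For Θ(u₁,…,u₅) = u₁u₂(u₄²+u₅²−u₃²) + u₄u₅(u₁²+u₂²−u₃²), at a point
(t₂, x₂, t₁, x₁, tₙ) with positive coordinates satisfying t₁ < x₂ + t₂,
the partial derivatives in the fourth and fifth variables are as computed
and do not both vanish. -/
theorem theta_partials_not_both_zero
    (Θ : ℝ → ℝ → ℝ → ℝ → ℝ → ℝ)
    (hΘ : ∀ u₁ u₂ u₃ u₄ u₅, Θ u₁ u₂ u₃ u₄ u₅ =
      u₁ * u₂ * (u₄ ^ 2 + u₅ ^ 2 - u₃ ^ 2) + u₄ * u₅ * (u₁ ^ 2 + u₂ ^ 2 - u₃ ^ 2))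
    (t₂ x₂ t₁ x₁ tₙ : ℝ)
    (ht₂ : 0 < t₂) (hx₂ : 0 < x₂) (ht₁ : 0 < t₁) (hx₁ : 0 < x₁) (htₙ : 0 < tₙ)
    (htri : t₁ < x₂ + t₂) :
    deriv (fun u => Θ t₂ x₂ t₁ u tₙ) x₁
        = 2 * x₁ * t₂ * x₂ + tₙ * (x₂ ^ 2 + t₂ ^ 2 - t₁ ^ 2) ∧
    deriv (fun u => Θ t₂ x₂ t₁ x₁ u) tₙ
        = 2 * tₙ * t₂ * x₂ + x₁ * (x₂ ^ 2 + t₂ ^ 2 - t₁ ^ 2) ∧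
    ¬ (2 * x₁ * t₂ * x₂ + tₙ * (x₂ ^ 2 + t₂ ^ 2 - t₁ ^ 2) = 0 ∧
       2 * tₙ * t₂ * x₂ + x₁ * (x₂ ^ 2 + t₂ ^ 2 - t₁ ^ 2) = 0) := by
  refine ⟨?_, ?_, ?_⟩
  · have h : (fun u => Θ t₂ x₂ t₁ u tₙ) =
        fun u => t₂ * x₂ * (u ^ 2 + tₙ ^ 2 - t₁ ^ 2) + u * tₙ * (t₂ ^ 2 + x₂ ^ 2 - t₁ ^ 2) := by
      funext u; exact hΘ t₂ x₂ t₁ u tₙ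
    rw [h]
    have : HasDerivAt (fun u => t₂ * x₂ * (u ^ 2 + tₙ ^ 2 - t₁ ^ 2) +
        u * tₙ * (t₂ ^ 2 + x₂ ^ 2 - t₁ ^ 2))
        (2 * x₁ * t₂ * x₂ + tₙ * (x₂ ^ 2 + t₂ ^ 2 - t₁ ^ 2)) x₁ := by
      have h1 : HasDerivAt (fun u : ℝ => u ^ 2 + tₙ ^ 2 - t₁ ^ 2) (2 * x₁) x₁ := by
        simpa using ((hasDerivAt_pow 2 x₁).add_const (tₙ ^ 2)).sub_const (t₁ ^ 2)
      have h2 : HasDerivAt (fun u : ℝ => u * tₙ * (t₂ ^ 2 + x₂ ^ 2 - t₁ ^ 2))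
          (tₙ * (t₂ ^ 2 + x₂ ^ 2 - t₁ ^ 2)) x₁ := by
        simpa using ((hasDerivAt_id x₁).mul_const tₙ).mul_const (t₂ ^ 2 + x₂ ^ 2 - t₁ ^ 2)
      have := (h1.const_mul (t₂ * x₂)).add h2
      exact this.congr_deriv (by ring)
    exact this.deriv
  · have h : (fun u => Θ t₂ x₂ t₁ x₁ u) =
        fun u => t₂ * x₂ * (x₁ ^ 2 + u ^ 2 - t₁ ^ 2) + x₁ * u * (t₂ ^ 2 + x₂ ^ 2 - t₁ ^ 2) := by
      funext u; exact hΘ t₂ x₂ t₁ x₁ u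
    rw [h]
    have : HasDerivAt (fun u => t₂ * x₂ * (x₁ ^ 2 + u ^ 2 - t₁ ^ 2) +
        x₁ * u * (t₂ ^ 2 + x₂ ^ 2 - t₁ ^ 2))
        (2 * tₙ * t₂ * x₂ + x₁ * (x₂ ^ 2 + t₂ ^ 2 - t₁ ^ 2)) tₙ := by
      have h1 : HasDerivAt (fun u : ℝ => x₁ ^ 2 + u ^ 2 - t₁ ^ 2) (2 * tₙ) tₙ := by
        simpa using ((hasDerivAt_pow 2 tₙ).const_add (x₁ ^ 2)).sub_const (t₁ ^ 2)
      have h2 : HasDerivAt (fun u : ℝ => x₁ * u * (t₂ ^ 2 + x₂ ^ 2 - t₁ ^ 2))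
          (x₁ * (t₂ ^ 2 + x₂ ^ 2 - t₁ ^ 2)) tₙ := by
        simpa [mul_comm] using (((hasDerivAt_id tₙ).const_mul x₁).mul_const
          (t₂ ^ 2 + x₂ ^ 2 - t₁ ^ 2))
      have := (h1.const_mul (t₂ * x₂)).add h2
      exact this.congr_deriv (by ring)
    exact this.deriv
  · rintro ⟨h1, h2⟩
    have hsum : (x₁ + tₙ) * ((x₂ + t₂) ^ 2 - t₁ ^ 2) = 0 := by nlinarith [h1, h2]
    have hpos : 0 < (x₁ + tₙ) * ((x₂ + t₂) ^ 2 - t₁ ^ 2) := by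
      apply mul_pos (by linarith)
      nlinarith
    linarith
end

section
/- On the open set Ω₃ of nondegenerate triangles with sides (x,y,z), the map Ψ(x,y,z) = (x+y+z, Φ(x,y,z)), where Φ is the squared Heron area, has differential of rank 2 at every point with not all of x, y, z equal. Equivalently, the three partial derivatives of Φ are all equal at a point of Ω₃ only if x = y = z. -/
lemma pd_aux (a b x : ℝ) (f : ℝ → ℝ)
    (hf : ∀ t, f t = (1/16) * (2*t^2*(a^2+b^2) + 2*a^2*b^2 - t^4 - a^4 - b^4)) :
    deriv f x = (1/4) * x * (a^2 + b^2 - x^2) := by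
  have hfe : f = fun t => (1/16) * (2*t^2*(a^2+b^2) + 2*a^2*b^2 - t^4 - a^4 - b^4) :=
    funext hf
  rw [hfe]
  have h2 : HasDerivAt (fun t : ℝ => t^2) (2*x) x := by simpa using hasDerivAt_pow 2 x
  have h4 : HasDerivAt (fun t : ℝ => t^4) (4*x^3) x := by simpa using hasDerivAt_pow 4 x
  have h : HasDerivAt (fun t : ℝ => (1/16) * (2*t^2*(a^2+b^2) + 2*a^2*b^2 - t^4 - a^4 - b^4))
      ((1/4) * x * (a^2 + b^2 - x^2)) x := by
    have := ((((h2.const_mul 2).mul_const (a^2+b^2)).add_const (2*a^2*b^2)).sub h4).sub_const (a^4 + b^4)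
    have := this.const_mul (1/16 : ℝ)
    refine (this.congr_deriv (by ring)).congr_of_eventuallyEq (Filter.Eventually.of_forall fun t => ?_)
    simp only [Pi.sub_apply]; ring
  exact h.deriv

/-- On Ω₃, the map Ψ = (perimeter, squared Heron area) has rank-2 differential
away from equilateral triangles: the three partial derivatives of
Φ(x,y,z) = (1/16)(x+y+z)(−x+y+z)(x−y+z)(x+y−z) are all equal only if x = y = z. -/
theorem heron_sq_partials_equal_iff_equilateral
    (Φ : ℝ × ℝ × ℝ → ℝ)
    (hΦ : ∀ v : ℝ × ℝ × ℝ, Φ v =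
      (1 / 16) * ((v.1 + v.2.1 + v.2.2) * (-v.1 + v.2.1 + v.2.2) *
        (v.1 - v.2.1 + v.2.2) * (v.1 + v.2.1 - v.2.2)))
    (x y z : ℝ) (hx : 0 < x) (hy : 0 < y) (hz : 0 < z)
    (h1 : x < y + z) (h2 : y < x + z) (h3 : z < x + y)
    (heq : deriv (fun t => Φ (t, y, z)) x = deriv (fun t => Φ (x, t, z)) y ∧
           deriv (fun t => Φ (x, t, z)) y = deriv (fun t => Φ (x, y, t)) z) :
    x = y ∧ y = z := by
  have d1 : deriv (fun t => Φ (t, y, z)) x = (1/4) * x * (y^2 + z^2 - x^2) :=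
    pd_aux y z x _ (fun t => by rw [hΦ]; ring)
  have d2 : deriv (fun t => Φ (x, t, z)) y = (1/4) * y * (x^2 + z^2 - y^2) :=
    pd_aux x z y _ (fun t => by rw [hΦ]; ring)
  have d3 : deriv (fun t => Φ (x, y, t)) z = (1/4) * z * (x^2 + y^2 - z^2) :=
    pd_aux x y z _ (fun t => by rw [hΦ]; ring)
  obtain ⟨e1, e2⟩ := heq
  rw [d1, d2] at e1
  rw [d2, d3] at e2
  have k1 : (x - y) * ((x + y + z) * (x + y - z)) = 0 := by linear_combination (-4:ℝ) * e1
  have k2 : (y - z) * ((x + y + z) * (y + z - x)) = 0 := by linear_combination (-4:ℝ) * e2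
  have hs : 0 < x + y + z := by linarith
  have hxy : x = y := by
    rcases mul_eq_zero.mp k1 with h | h
    · linarith
    · nlinarith
  have hyz : y = z := by
    rcases mul_eq_zero.mp k2 with h | h
    · linarith
    · nlinarith
  exact ⟨hxy, hyz⟩
end

section
/- Let h(x,y,z) = (1/4)√((x+y+z)(−x+y+z)(x−y+z)(x+y−z)) on the set V of positive triples satisfying strict triangle inequalities. If (t_{k−1}, x_k, t_k) ∈ V and (t_k, x_k, t_{k+1}) ∈ V with the same second entry x_k, and ∂h/∂z(t_{k−1}, x_k, t_k) + ∂h/∂x(t_k, x_k, t_{k+1}) = 0, then (t_{k+1} − t_{k−1})(t_{k+1}t_{k−1} − x_k² + t_k²)(t_{k+1}t_{k−1} + x_k² − t_k²) = 0. -/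
set_option maxHeartbeats 1000000


/-- If h(x,y,z) = (1/4)√((x+y+z)(−x+y+z)(x−y+z)(x+y−z)), the triples
(t_{k−1}, x_k, t_k) and (t_k, x_k, t_{k+1}) both lie in the set V of positive
triples satisfying the strict triangle inequalities, and
∂h/∂z(t_{k−1}, x_k, t_k) + ∂h/∂x(t_k, x_k, t_{k+1}) = 0, then
(t_{k+1} − t_{k−1})(t_{k+1}t_{k−1} − x_k² + t_k²)(t_{k+1}t_{k−1} + x_k² − t_k²) = 0. -/
theorem area_partials_cancel_factorization
    (h : ℝ → ℝ → ℝ → ℝ)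
    (hh : ∀ x y z, h x y z =
      (1 / 4) * Real.sqrt ((x + y + z) * (-x + y + z) * (x - y + z) * (x + y - z)))
    (tm xk tk tp : ℝ)
    (htm : 0 < tm) (hxk : 0 < xk) (htk : 0 < tk) (htp : 0 < tp)
    (h1 : tm < xk + tk) (h2 : xk < tm + tk) (h3 : tk < tm + xk)
    (h4 : tk < xk + tp) (h5 : xk < tk + tp) (h6 : tp < tk + xk)
    (hzero : deriv (fun u => h tm xk u) tk + deriv (fun u => h u xk tp) tk = 0) :
    (tp - tm) * (tp * tm - xk ^ 2 + tk ^ 2) * (tp * tm + xk ^ 2 - tk ^ 2) = 0 := by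
  set A : ℝ := (tm + xk + tk) * (-tm + xk + tk) * (tm - xk + tk) * (tm + xk - tk) with hAdef
  set B : ℝ := (tk + xk + tp) * (-tk + xk + tp) * (tk - xk + tp) * (tk + xk - tp) with hBdef
  have hA : 0 < A := by
    apply mul_pos (mul_pos (mul_pos (by linarith) (by linarith)) (by linarith)) (by linarith)
  have hB : 0 < B := by
    apply mul_pos (mul_pos (mul_pos (by linarith) (by linarith)) (by linarith)) (by linarith)
  -- derivative of first function
  have dP1 : HasDerivAt (fun u : ℝ => (tm + xk + u) * (-tm + xk + u) * (tm - xk + u) * (tm + xk - u))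
      ((1 * (-tm + xk + tk) + (tm + xk + tk) * 1) * (tm - xk + tk) * (tm + xk - tk)
        + ((tm + xk + tk) * (-tm + xk + tk) * 1) * (tm + xk - tk)
        + ((tm + xk + tk) * (-tm + xk + tk) * (tm - xk + tk)) * (-1)) tk := by
    have i1 : HasDerivAt (fun u : ℝ => tm + xk + u) 1 tk := (hasDerivAt_id tk).const_add _
    have i2 : HasDerivAt (fun u : ℝ => -tm + xk + u) 1 tk := (hasDerivAt_id tk).const_add _
    have i3 : HasDerivAt (fun u : ℝ => tm - xk + u) 1 tk := (hasDerivAt_id tk).const_add _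
    have i4 : HasDerivAt (fun u : ℝ => tm + xk - u) (-1) tk := by
      simpa using (hasDerivAt_id tk).const_sub (tm + xk)
    have := ((i1.fun_mul i2).fun_mul i3).fun_mul i4
    convert this using 1
    · rfl
    · rfl
    ring
  have dP2 : HasDerivAt (fun u : ℝ => (u + xk + tp) * (-u + xk + tp) * (u - xk + tp) * (u + xk - tp))
      ((1 * (-tk + xk + tp) + (tk + xk + tp) * (-1)) * (tk - xk + tp) * (tk + xk - tp)
        + ((tk + xk + tp) * (-tk + xk + tp) * 1) * (tk + xk - tp)
        + ((tk + xk + tp) * (-tk + xk + tp) * (tk - xk + tp)) * 1) tk := by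
    have i1 : HasDerivAt (fun u : ℝ => u + xk + tp) 1 tk := by
      simpa using ((hasDerivAt_id tk).add_const xk).add_const tp
    have i2 : HasDerivAt (fun u : ℝ => -u + xk + tp) (-1) tk := by
      simpa using (((hasDerivAt_id tk).neg).add_const xk).add_const tp
    have i3 : HasDerivAt (fun u : ℝ => u - xk + tp) 1 tk := by
      simpa using ((hasDerivAt_id tk).sub_const xk).add_const tp
    have i4 : HasDerivAt (fun u : ℝ => u + xk - tp) 1 tk := by
      simpa using ((hasDerivAt_id tk).add_const xk).sub_const tp
    have := ((i1.fun_mul i2).fun_mul i3).fun_mul i4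
    convert this using 1
    · rfl
    · rfl
    ring
  have dh1 : HasDerivAt (fun u : ℝ => h tm xk u)
      ((1/4) * (1 / (2 * Real.sqrt A) *
        ((1 * (-tm + xk + tk) + (tm + xk + tk) * 1) * (tm - xk + tk) * (tm + xk - tk)
        + ((tm + xk + tk) * (-tm + xk + tk) * 1) * (tm + xk - tk)
        + ((tm + xk + tk) * (-tm + xk + tk) * (tm - xk + tk)) * (-1)))) tk := by
    have hs : HasDerivAt Real.sqrt (1 / (2 * Real.sqrt A)) A := Real.hasDerivAt_sqrt hA.ne'
    have comp := (hs.comp tk dP1)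
    have : (fun u : ℝ => h tm xk u) = fun u =>
        (1/4) * Real.sqrt ((tm + xk + u) * (-tm + xk + u) * (tm - xk + u) * (tm + xk - u)) := by
      funext u; rw [hh]
    rw [this]
    exact comp.const_mul (1/4)
  have dh2 : HasDerivAt (fun u : ℝ => h u xk tp)
      ((1/4) * (1 / (2 * Real.sqrt B) *
        ((1 * (-tk + xk + tp) + (tk + xk + tp) * (-1)) * (tk - xk + tp) * (tk + xk - tp)
        + ((tk + xk + tp) * (-tk + xk + tp) * 1) * (tk + xk - tp)
        + ((tk + xk + tp) * (-tk + xk + tp) * (tk - xk + tp)) * 1))) tk := by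
    have hs : HasDerivAt Real.sqrt (1 / (2 * Real.sqrt B)) B := Real.hasDerivAt_sqrt hB.ne'
    have comp := (hs.comp tk dP2)
    have : (fun u : ℝ => h u xk tp) = fun u =>
        (1/4) * Real.sqrt ((u + xk + tp) * (-u + xk + tp) * (u - xk + tp) * (u + xk - tp)) := by
      funext u; rw [hh]
    rw [this]
    exact comp.const_mul (1/4)
  rw [dh1.deriv, dh2.deriv] at hzero
  set sA : ℝ := Real.sqrt A with hsA
  set sB : ℝ := Real.sqrt B with hsB
  have hsApos : 0 < sA := Real.sqrt_pos.mpr hA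
  have hsBpos : 0 < sB := Real.sqrt_pos.mpr hB
  have hsA2 : sA ^ 2 = A := Real.sq_sqrt hA.le
  have hsB2 : sB ^ 2 = B := Real.sq_sqrt hB.le
  -- clear denominators: p * sB + q * sA = 0, where p,q as below
  have key : (tm^2 + xk^2 - tk^2) * sB + (xk^2 + tp^2 - tk^2) * sA = 0 := by
    have h8 : tk * ((tm^2 + xk^2 - tk^2) * sB + (xk^2 + tp^2 - tk^2) * sA) = 0 := by
      field_simp at hzero
      nlinarith [hzero, hsApos, hsBpos]
    have := mul_eq_zero.mp h8
    rcases this with h' | h'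
    · exact absurd h' htk.ne'
    · exact h'
  -- square it
  have key2 : (tm^2 + xk^2 - tk^2)^2 * B = (xk^2 + tp^2 - tk^2)^2 * A := by
    have e : (tm^2 + xk^2 - tk^2) * sB = -((xk^2 + tp^2 - tk^2) * sA) := by linarith
    have e2 : ((tm^2 + xk^2 - tk^2) * sB)^2 = ((xk^2 + tp^2 - tk^2) * sA)^2 := by
      rw [e]; ring
    calc (tm^2 + xk^2 - tk^2)^2 * B = ((tm^2 + xk^2 - tk^2) * sB)^2 := by rw [← hsB2]; ring
      _ = ((xk^2 + tp^2 - tk^2) * sA)^2 := e2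
      _ = (xk^2 + tp^2 - tk^2)^2 * A := by rw [← hsA2]; ring
  -- from key2: p^2 * tp^2 = q^2 * tm^2
  have key3 : (tm^2 + xk^2 - tk^2)^2 * tp^2 = (xk^2 + tp^2 - tk^2)^2 * tm^2 := by
    have h9 : 4 * xk^2 * ((tm^2 + xk^2 - tk^2)^2 * tp^2 - (xk^2 + tp^2 - tk^2)^2 * tm^2) = 0 := by
      rw [hAdef, hBdef] at key2
      linear_combination key2
    have h10 : (4:ℝ) * xk^2 ≠ 0 := by positivity
    have h11 := (mul_eq_zero.mp h9).resolve_left h10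
    linarith
  have hfac : (tp - tm) * (tp * tm - xk ^ 2 + tk ^ 2) * (tp * tm + xk ^ 2 - tk ^ 2) * (tp + tm)
      = (xk^2 + tp^2 - tk^2)^2 * tm^2 - (tm^2 + xk^2 - tk^2)^2 * tp^2 := by ring
  have hsum : (0:ℝ) < tp + tm := by linarith
  have : (tp - tm) * (tp * tm - xk ^ 2 + tk ^ 2) * (tp * tm + xk ^ 2 - tk ^ 2) * (tp + tm) = 0 := by
    rw [hfac]; linarith
  exact (mul_eq_zero.mp this).resolve_right hsum.ne'
end
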